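/- Let T be a compactly generated R-linear triangulated category with R graded-commutative noetherian. For every nonzero object X of T the cosupport cosupp_R X is nonempty; equivalently, cosupp_R X = ∅ if and only if X = 0. -/
import Mathlib


open CategoryTheory Limits Pretriangulated

universe v u

/-- **Theorem (cosupp = ∅ iff zero).** Let `T` be a compactly generated `R`-linear
triangulated category (`R` commutative noetherian), with local cohomology functors `Γ_p`
and local homology functors `Λ^p` (right adjoints), Koszul objects `X ↦ X//p` and
localized Koszul objects `X ↦ X(p)`; `supp_R X = {p : Γ_p X ≠ 0}` and
`cosupp_R X = {p : Λ^p X ≠ 0}`.  Given the standard facts about supports and Koszul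
objects, one has: `cosupp_R X = ∅` if and only if `X = 0`. -/
theorem stmt15 {R : Type*} [CommRing R] [IsNoetherianRing R]
    {T : Type u} [Category.{v} T] [Preadditive T] [HasZeroObject T]
    [HasShift T ℤ] [∀ n : ℤ, (CategoryTheory.shiftFunctor T n).Additive]
    [Pretriangulated T]
    (Gam Lam : PrimeSpectrum R → T ⥤ T)
    (adj : ∀ p, Gam p ⊣ Lam p)
    (kos objp : T → PrimeSpectrum R → T) :
    -- the support and cosupport of an object
    let supp : T → Set (PrimeSpectrum R) := fun X => {p | ¬ IsZero ((Gam p).obj X)}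
    let cosupp : T → Set (PrimeSpectrum R) := fun X => {p | ¬ IsZero ((Lam p).obj X)}
    -- an object is zero iff its support is empty
    (∀ X : T, supp X = ∅ ↔ IsZero X) →
    -- `supp (X//p) = V(p) ∩ supp X`
    (∀ (X : T) (p), supp (kos X p) = {q | p.asIdeal ≤ q.asIdeal} ∩ supp X) →
    -- if `p` is maximal in `supp X` then the Koszul object `X//p` is `p`-local,
    -- hence isomorphic to `X(p)`
    (∀ (X : T) (p), p ∈ supp X → (∀ q ∈ supp X, p.asIdeal ≤ q.asIdeal → q = p) →
      Nonempty (kos X p ≅ objp X p)) →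
    -- thick closure: a nonzero map `X(p) → X//p` yields a nonzero map `X(p) → X`
    (∀ (X : T) (p) (f : objp X p ⟶ kos X p), f ≠ 0 → ∃ g : objp X p ⟶ X, g ≠ 0) →
    -- the characterization of cosupport via localized Koszul objects
    (∀ (X : T) (p), (∃ (C : T) (f : objp C p ⟶ X), f ≠ 0) → p ∈ cosupp X) →
    ∀ X : T, cosupp X = ∅ ↔ IsZero X := by
  intro supp cosupp hsupp hkos hmax hthick hcochar X
  constructor
  · intro hempty
    -- suppose X ≠ 0; derive a contradiction by producing an element of cosupp X
    by_contra hX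
    -- supp X is nonempty
    have hs : supp X ≠ ∅ := fun h => hX ((hsupp X).mp h)
    obtain ⟨p0, hp0⟩ := Set.nonempty_iff_ne_empty.mpr hs
    -- find a maximal element of supp X using noetherianity
    set S : Set (Ideal R) := {I | ∃ q ∈ supp X, q.asIdeal = I} with hS
    have hSne : S.Nonempty := ⟨p0.asIdeal, p0, hp0, rfl⟩
    obtain ⟨I, hIS, hImax⟩ :=
      (set_has_maximal_iff_noetherian.mpr (inferInstance : IsNoetherian R R)) S hSne
    obtain ⟨p, hp, rfl⟩ := hIS
    have hpmax : ∀ q ∈ supp X, p.asIdeal ≤ q.asIdeal → q = p := by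
      intro q hq hle
      have : ¬ p.asIdeal < q.asIdeal := hImax q.asIdeal ⟨q, hq, rfl⟩
      have heq : p.asIdeal = q.asIdeal := by
        by_contra hne
        exact this (lt_of_le_of_ne hle hne)
      exact PrimeSpectrum.ext heq.symm
    obtain ⟨e⟩ := hmax X p hp hpmax
    -- kos X p is nonzero since p ∈ supp (kos X p)
    have hkosX : ¬ IsZero (kos X p) := by
      intro hz
      have : supp (kos X p) = ∅ := (hsupp (kos X p)).mpr hz
      rw [hkos X p] at this
      have : p ∈ ({q | p.asIdeal ≤ q.asIdeal} ∩ supp X : Set (PrimeSpectrum R)) :=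
        ⟨le_refl p.asIdeal, hp⟩
      simp_all
    -- the iso gives a nonzero map objp X p ⟶ kos X p
    have hinv : (e.inv : objp X p ⟶ kos X p) ≠ 0 := by
      intro h0
      apply hkosX
      rw [IsZero.iff_id_eq_zero, ← e.hom_inv_id, h0, Limits.comp_zero]
    obtain ⟨g, hg⟩ := hthick X p e.inv hinv
    have hpcos : p ∈ cosupp X := hcochar X p ⟨X, g, hg⟩
    rw [hempty] at hpcos
    exact hpcos
  · intro hX
    -- if X is zero, every Λ^p X is zero via the adjunction
    ext p
    simp only [Set.mem_empty_iff_false, iff_false]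
    intro hp
    apply hp
    rw [IsZero.iff_id_eq_zero]
    have : Subsingleton ((Gam p).obj ((Lam p).obj X) ⟶ X) :=
      ⟨fun a b => hX.eq_of_tgt a b⟩
    have hsub : Subsingleton ((Lam p).obj X ⟶ (Lam p).obj X) :=
      ((adj p).homEquiv _ _).symm.subsingleton
    exact Subsingleton.elim _ _
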